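/- Let q be an odd prime dividing m·n. Define the following maps on (ℂ∖{0})×ℂ: μ(x,y) := (ζ_{2n}^{−1}·x^{−1}, ζ_{2q}·y·x^{−2mn/q}), ν(x,y) := (ζ_n·x, y), and their coefficient-conjugates μ̄(x,y) := (ζ_{2n}·x^{−1}, ζ_{2q}^{−1}·y·x^{−2mn/q}), ν̄(x,y) := (ζ_n^{−1}·x, y). Then for every integer k ≥ 0 and every (x,y) with x ≠ 0: (μ̄ ∘ ν̄^k)((μ ∘ ν^k)(x,y)) = (ζ_n^{2k+1}·x, ζ_n^{(2k+1)·mn/q}·y). Consequently this composite is the identity map if and only if n divides 2k+1; in particular, if n is odd it is the identity for k = (n−1)/2, while if n is even it is not the identity for any k. -/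

import Mathlib

open Complex

noncomputable section

/-- `ζ_r = exp(2πi/r)`, a primitive `r`-th root of unity. -/
def zetaRoot (r : ℕ) : ℂ := Complex.exp (2 * Real.pi * Complex.I / r)

lemma zetaRoot_ne_zero (r : ℕ) : zetaRoot r ≠ 0 := Complex.exp_ne_zero _

lemma zetaRoot_sq (n : ℕ) (hn : n ≠ 0) : zetaRoot (2 * n) ^ 2 = zetaRoot n := by
  unfold zetaRoot
  rw [← Complex.exp_nat_mul]
  congr 1
  have : (n : ℂ) ≠ 0 := Nat.cast_ne_zero.mpr hn
  push_cast
  field_simp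

lemma zetaRoot_isPrimitiveRoot (n : ℕ) (hn : n ≠ 0) : IsPrimitiveRoot (zetaRoot n) n := by
  simpa [zetaRoot] using Complex.isPrimitiveRoot_exp n hn

lemma iter_mul (c : ℂ) (k : ℕ) (p : ℂ × ℂ) :
    (fun p : ℂ × ℂ => (c * p.1, p.2))^[k] p = (c ^ k * p.1, p.2) := by
  induction k with
  | zero => simp
  | succ k ih =>
    rw [Function.iterate_succ_apply', ih]
    simp
    ring

lemma calc1 (ξ x : ℂ) (hξ : ξ ≠ 0) (hx : x ≠ 0) (k : ℕ) :
    ξ * ((ξ ^ 2)⁻¹ ^ k * (ξ⁻¹ * ((ξ ^ 2) ^ k * x)⁻¹))⁻¹ = (ξ ^ 2) ^ (2 * k + 1) * x := by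
  simp only [inv_pow]
  field_simp
  ring

lemma calc2 (ξ η x y : ℂ) (hξ : ξ ≠ 0) (hη : η ≠ 0) (hx : x ≠ 0) (k d : ℕ) :
    η⁻¹ * (η * y * ((ξ ^ 2) ^ k * x)⁻¹ ^ (2 * d)) *
      (((ξ ^ 2)⁻¹ ^ k * (ξ⁻¹ * ((ξ ^ 2) ^ k * x)⁻¹))⁻¹) ^ (2 * d)
      = (ξ ^ 2) ^ ((2 * k + 1) * d) * y := by
  simp only [inv_pow, mul_inv, inv_inv, mul_pow]
  field_simp
  ring

/-- Weil's cocycle computation: with `μ, ν` and their coefficient-conjugates as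
below, `(μ̄ ∘ ν̄^k)((μ ∘ ν^k)(x,y)) = (ζₙ^{2k+1}x, ζₙ^{(2k+1)mn/q}y)` for `x ≠ 0`; this
composite is the identity (on `x ≠ 0`) iff `n ∣ 2k+1`; in particular for `n` odd it is the
identity when `k = (n−1)/2`, and for `n` even it is never the identity. -/
theorem statement_14 (m n : ℕ) (hm : 2 ≤ m) (hn : 2 ≤ n)
    (q : ℕ) (hq : Nat.Prime q) (hodd : Odd q) (hdvd : q ∣ m * n)
    (μ ν μbar νbar : ℂ × ℂ → ℂ × ℂ)
    (hμ : μ = fun p => ((zetaRoot (2 * n))⁻¹ * p.1⁻¹,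
      zetaRoot (2 * q) * p.2 * p.1⁻¹ ^ (2 * m * n / q)))
    (hν : ν = fun p => (zetaRoot n * p.1, p.2))
    (hμbar : μbar = fun p => (zetaRoot (2 * n) * p.1⁻¹,
      (zetaRoot (2 * q))⁻¹ * p.2 * p.1⁻¹ ^ (2 * m * n / q)))
    (hνbar : νbar = fun p => ((zetaRoot n)⁻¹ * p.1, p.2)) :
    (∀ k : ℕ, ∀ x y : ℂ, x ≠ 0 →
      (μbar ∘ νbar^[k]) ((μ ∘ ν^[k]) (x, y)) =
        (zetaRoot n ^ (2 * k + 1) * x, zetaRoot n ^ ((2 * k + 1) * (m * n) / q) * y)) ∧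
    (∀ k : ℕ,
      (∀ x y : ℂ, x ≠ 0 → (μbar ∘ νbar^[k]) ((μ ∘ ν^[k]) (x, y)) = (x, y)) ↔
        n ∣ 2 * k + 1) ∧
    (Odd n → ∀ x y : ℂ, x ≠ 0 →
      (μbar ∘ νbar^[(n - 1) / 2]) ((μ ∘ ν^[(n - 1) / 2]) (x, y)) = (x, y)) ∧
    (Even n → ∀ k : ℕ,
      ¬ ∀ x y : ℂ, x ≠ 0 → (μbar ∘ νbar^[k]) ((μ ∘ ν^[k]) (x, y)) = (x, y)) := by
  have hn0 : n ≠ 0 := by omega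
  set ζ := zetaRoot n with hζ
  set ξ := zetaRoot (2 * n) with hξdef
  set η := zetaRoot (2 * q) with hηdef
  have hξ : ξ ≠ 0 := zetaRoot_ne_zero _
  have hη : η ≠ 0 := zetaRoot_ne_zero _
  have hζ0 : ζ ≠ 0 := zetaRoot_ne_zero _
  have hsq : ξ ^ 2 = ζ := zetaRoot_sq n hn0
  have hE : 2 * m * n / q = 2 * (m * n / q) := by
    rw [mul_assoc, Nat.mul_div_assoc 2 hdvd]
  have hE2 : ∀ k : ℕ, (2 * k + 1) * (m * n) / q = (2 * k + 1) * (m * n / q) := fun k =>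
    Nat.mul_div_assoc _ hdvd
  set d := m * n / q with hd
  -- the main formula
  have main : ∀ k : ℕ, ∀ x y : ℂ, x ≠ 0 →
      (μbar ∘ νbar^[k]) ((μ ∘ ν^[k]) (x, y)) =
        (ζ ^ (2 * k + 1) * x, ζ ^ ((2 * k + 1) * (m * n) / q) * y) := by
    intro k x y hx
    rw [hμ, hν, hμbar, hνbar]
    simp only [Function.comp_apply, iter_mul]
    rw [hE, hE2 k]
    rw [← hsq]
    exact Prod.ext (calc1 ξ x hξ hx k) (calc2 ξ η x y hξ hη hx k d)
  have hprim : IsPrimitiveRoot ζ n := zetaRoot_isPrimitiveRoot n hn0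
  -- the iff
  have main2 : ∀ k : ℕ,
      (∀ x y : ℂ, x ≠ 0 → (μbar ∘ νbar^[k]) ((μ ∘ ν^[k]) (x, y)) = (x, y)) ↔
        n ∣ 2 * k + 1 := by
    intro k
    constructor
    · intro h
      have h1 := h 1 1 one_ne_zero
      rw [main k 1 1 one_ne_zero] at h1
      have : ζ ^ (2 * k + 1) = 1 := by
        have := congrArg Prod.fst h1
        simpa using this
      exact (hprim.pow_eq_one_iff_dvd _).mp this
    · intro h x y hx
      rw [main k x y hx]
      have h1 : ζ ^ (2 * k + 1) = 1 := (hprim.pow_eq_one_iff_dvd _).mpr h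
      have h2 : ζ ^ ((2 * k + 1) * (m * n) / q) = 1 := by
        rw [hE2 k]
        exact (hprim.pow_eq_one_iff_dvd _).mpr (h.mul_right d)
      rw [h1, h2, one_mul, one_mul]
  refine ⟨main, main2, ?_, ?_⟩
  · intro hoddn x y hx
    have : 2 * ((n - 1) / 2) + 1 = n := by
      obtain ⟨j, hj⟩ := hoddn
      omega
    have := (main2 ((n - 1) / 2)).mpr (by rw [this])
    exact this x y hx
  · intro heven k h
    have hdvd2 : n ∣ 2 * k + 1 := (main2 k).mp h
    obtain ⟨j, hj⟩ := heven
    have h2 : (2:ℕ) ∣ 2 * k + 1 := dvd_trans ⟨j, by omega⟩ hdvd2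
    omega
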